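/- Let ν > 3/2 and c ≥ 0. Suppose Y : ℝ³ → ℝ³ is a smooth vector field satisfying L Y = 0 on all of ℝ³, and suppose that for every x ∈ ℝ³ with x ≠ 0 one has ‖Y(x)‖ ≤ c‖x‖^{1−ν} and ‖DY(x)‖ ≤ c‖x‖^{−ν}, where DY denotes the (total) derivative of Y. Then Y is a conformal Killing vector field: (𝒟Y)_{ab}(x) = 0 for all x ∈ ℝ³ and all a, b. -/

import Mathlib

open Metric Set MeasureTheory Filter

noncomputable section

/-- Euclidean 3-space. -/
abbrev E3 : Type := EuclideanSpace ℝ (Fin 3)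

/-- Partial derivative `∂_a g` in the direction of the `a`-th coordinate vector. -/
def pd (a : Fin 3) (g : E3 → ℝ) : E3 → ℝ :=
  fun x => fderiv ℝ g x (EuclideanSpace.single a 1)

/-- The Euclidean conformal Killing operator
`(𝒟X)_{ab} = ½(∂_a X_b + ∂_b X_a) − (1/3)δ_{ab} Σ_c ∂_c X_c`. -/
def cko (X : E3 → E3) (a b : Fin 3) : E3 → ℝ := fun x =>
  (pd a (fun y => X y b) x + pd b (fun y => X y a) x) / 2 -
    (if a = b then (1 : ℝ) else 0) / 3 * ∑ c : Fin 3, pd c (fun y => X y c) x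

/-- The Euclidean vector Laplacian `(L X)_a = −Σ_b ∂_b (𝒟X)_{ab}`. -/
def vecLap (X : E3 → E3) : E3 → E3 := fun x =>
  (EuclideanSpace.equiv (Fin 3) ℝ).symm fun a => -∑ b : Fin 3, pd b (cko X a b) x

lemma pd_contDiff {g : E3 → ℝ} (hg : ContDiff ℝ (⊤ : ℕ∞) g) (a : Fin 3) :
    ContDiff ℝ (⊤ : ℕ∞) (pd a g) := by
  have h1 : ContDiff ℝ (⊤:ℕ∞) (fderiv ℝ g) := hg.fderiv_right (by exact_mod_cast le_top)
  exact (ContinuousLinearMap.apply ℝ ℝ (EuclideanSpace.single a 1)).contDiff.comp h1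

lemma comp_contDiff {Y : E3 → E3} (hY : ContDiff ℝ (⊤ : ℕ∞) Y) (b : Fin 3) :
    ContDiff ℝ (⊤ : ℕ∞) (fun y => Y y b) :=
  (EuclideanSpace.proj (𝕜 := ℝ) b).contDiff.comp hY

lemma cko_contDiff {Y : E3 → E3} (hY : ContDiff ℝ (⊤ : ℕ∞) Y) (a b : Fin 3) :
    ContDiff ℝ (⊤ : ℕ∞) (cko Y a b) := by
  unfold cko
  exact (((pd_contDiff (comp_contDiff hY b) a).add (pd_contDiff (comp_contDiff hY a) b)).div_const
    2).sub (contDiff_const.mul (ContDiff.sum fun c _ => pd_contDiff (comp_contDiff hY c) c))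

lemma abs_coord_le (x : E3) (a : Fin 3) : |x a| ≤ ‖x‖ := by
  have h := EuclideanSpace.norm_eq x
  rw [h]
  rw [show |x a| = Real.sqrt (|x a|^2) by rw [Real.sqrt_sq_eq_abs, abs_abs]]
  apply Real.sqrt_le_sqrt
  rw [sq_abs]
  have := Finset.single_le_sum (f := fun i => ‖x i‖^2) (fun i _ => sq_nonneg ‖x i‖) (Finset.mem_univ a)
  simpa [Real.norm_eq_abs, sq_abs] using this

lemma pd_comp_eq {Y : E3 → E3} (hY : ContDiff ℝ (⊤ : ℕ∞) Y) (a b : Fin 3) (x : E3) :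
    pd a (fun y => Y y b) x = fderiv ℝ Y x (EuclideanSpace.single a 1) b := by
  have h : HasFDerivAt (fun y => Y y b)
      ((EuclideanSpace.proj (𝕜 := ℝ) b).comp (fderiv ℝ Y x)) x :=
    (EuclideanSpace.proj (𝕜 := ℝ) b).hasFDerivAt.comp x
      (hY.differentiable (by simp) x).hasFDerivAt
  simp [pd, h.fderiv]

lemma pd_bound {Y : E3 → E3} (hY : ContDiff ℝ (⊤ : ℕ∞) Y) (a b : Fin 3) (x : E3) :
    |pd a (fun y => Y y b) x| ≤ ‖fderiv ℝ Y x‖ := by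
  rw [pd_comp_eq hY a b x]
  calc |fderiv ℝ Y x (EuclideanSpace.single a 1) b|
      ≤ ‖fderiv ℝ Y x (EuclideanSpace.single a 1)‖ := abs_coord_le _ b
    _ ≤ ‖fderiv ℝ Y x‖ * ‖EuclideanSpace.single a (1:ℝ)‖ := (fderiv ℝ Y x).le_opNorm _
    _ = ‖fderiv ℝ Y x‖ := by simp [EuclideanSpace.norm_single]

lemma cko_bound {Y : E3 → E3} (hY : ContDiff ℝ (⊤ : ℕ∞) Y) (a b : Fin 3) (x : E3) :
    |cko Y a b x| ≤ 2 * ‖fderiv ℝ Y x‖ := by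
  have h := fun (a b : Fin 3) => pd_bound hY a b x
  have hD : (0:ℝ) ≤ ‖fderiv ℝ Y x‖ := norm_nonneg _
  simp only [cko, Fin.sum_univ_three]
  set D := ‖fderiv ℝ Y x‖
  set q1 := pd a (fun y => Y y b) x
  set q2 := pd b (fun y => Y y a) x
  set s := pd 0 (fun y => Y y 0) x + pd 1 (fun y => Y y 1) x + pd 2 (fun y => Y y 2) x with hsdef
  set t := (if a = b then (1:ℝ) else 0) with htdef
  have t1 : |(q1+q2)/2 - t/3*s| ≤ |(q1+q2)/2| + |t/3*s| := abs_sub _ _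
  have t2 : |(q1+q2)/2| ≤ D := by
    have h12 : |q1+q2| ≤ 2*D := (abs_add_le _ _).trans (by have := h a b; have := h b a; linarith)
    rw [abs_div]
    rw [show |(2:ℝ)| = 2 by norm_num]
    linarith
  have hs : |s| ≤ 3*D := by
    rw [hsdef]
    refine (abs_add_le _ _).trans ?_
    have := (abs_add_le (pd 0 (fun y => Y y 0) x) (pd 1 (fun y => Y y 1) x))
    have := h 0 0; have := h 1 1; have := h 2 2
    linarith
  have ht : |t| ≤ 1 := by rw [htdef]; split <;> norm_num
  have t3 : |t/3*s| ≤ D := by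
    rw [abs_mul, abs_div, show |(3:ℝ)| = 3 by norm_num]
    nlinarith [abs_nonneg s, abs_nonneg t]
  linarith

lemma hL_component {Y : E3 → E3} (hL : ∀ x, vecLap Y x = 0) (x : E3) (a : Fin 3) :
    ∑ b : Fin 3, pd b (cko Y a b) x = 0 := by
  have h := congrFun (congrArg (EuclideanSpace.equiv (Fin 3) ℝ) (hL x)) a
  simp [vecLap] at h
  exact h

lemma pd_div_expand {Y : E3 → E3} (hY : ContDiff ℝ (⊤ : ℕ∞) Y) (i : Fin 3) (x : E3) :
    pd i (fun y => ∑ a : Fin 3, Y y a * cko Y a i y) x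
      = ∑ a : Fin 3, (pd i (fun y => Y y a) x * cko Y a i x + Y x a * pd i (cko Y a i) x) := by
  have hdY : ∀ a : Fin 3, DifferentiableAt ℝ (fun y => Y y a) x := fun a =>
    ((comp_contDiff hY a).differentiable (by simp)) x
  have hdS : ∀ a b : Fin 3, DifferentiableAt ℝ (cko Y a b) x := fun a b =>
    ((cko_contDiff hY a b).differentiable (by simp)) x
  unfold pd
  rw [fderiv_fun_sum (A := fun a y => Y y a * cko Y a i y) (fun a _ => (hdY a).mul (hdS a i))]
  rw [ContinuousLinearMap.sum_apply]
  refine Finset.sum_congr rfl fun a _ => ?_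
  rw [fderiv_fun_mul (hdY a) (hdS a i)]
  simp only [ContinuousLinearMap.add_apply, ContinuousLinearMap.smul_apply, smul_eq_mul]
  ring

lemma div_identity {Y : E3 → E3} (hY : ContDiff ℝ (⊤ : ℕ∞) Y) (hL : ∀ x, vecLap Y x = 0)
    (x : E3) :
    ∑ i : Fin 3, pd i (fun y => ∑ a : Fin 3, Y y a * cko Y a i y) x
      = ∑ a : Fin 3, ∑ b : Fin 3, (cko Y a b x)^2 := by
  simp only [pd_div_expand hY]
  simp only [Finset.sum_add_distrib]
  have h2 : ∑ i : Fin 3, ∑ a : Fin 3, Y x a * pd i (cko Y a i) x = 0 := by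
    rw [Finset.sum_comm]
    refine Finset.sum_eq_zero fun a _ => ?_
    rw [← Finset.mul_sum, hL_component hL x a, mul_zero]
  rw [h2, add_zero]
  simp only [cko, Fin.sum_univ_three, Fin.ext_iff, Fin.val_zero, Fin.val_one, Fin.val_two]
  norm_num
  ring

def gfun (Y : E3 → E3) (i : Fin 3) : E3 → ℝ := fun x => ∑ a : Fin 3, Y x a * cko Y a i x

def Phi (Y : E3 → E3) : E3 → ℝ := fun x => ∑ a : Fin 3, ∑ b : Fin 3, (cko Y a b x)^2

def toE3 : (Fin 3 → ℝ) ≃L[ℝ] E3 := (EuclideanSpace.equiv (Fin 3) ℝ).symm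

lemma gfun_contDiff {Y : E3 → E3} (hY : ContDiff ℝ (⊤ : ℕ∞) Y) (i : Fin 3) :
    ContDiff ℝ (⊤ : ℕ∞) (gfun Y i) :=
  ContDiff.sum fun a _ => (comp_contDiff hY a).mul (cko_contDiff hY a i)

lemma Phi_continuous {Y : E3 → E3} (hY : ContDiff ℝ (⊤ : ℕ∞) Y) : Continuous (Phi Y) := by
  unfold Phi
  exact continuous_finset_sum _ fun a _ => continuous_finset_sum _ fun b _ =>
    ((cko_contDiff hY a b).continuous).pow 2

lemma Phi_nonneg (Y : E3 → E3) (x : E3) : 0 ≤ Phi Y x :=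
  Finset.sum_nonneg fun a _ => Finset.sum_nonneg fun b _ => sq_nonneg _

lemma gfun_bound (ν c : ℝ) (hν : 3 / 2 < ν) (hc : 0 ≤ c) {Y : E3 → E3}
    (hY : ContDiff ℝ (⊤ : ℕ∞) Y)
    (hb1 : ∀ x : E3, x ≠ 0 → ‖Y x‖ ≤ c * ‖x‖ ^ (1 - ν))
    (hb2 : ∀ x : E3, x ≠ 0 → ‖fderiv ℝ Y x‖ ≤ c * ‖x‖ ^ (-ν))
    {R : ℝ} (hR : 0 < R) {x : E3} (hx : R ≤ ‖x‖) (i : Fin 3) :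
    |gfun Y i x| ≤ 6 * c^2 * R ^ (1 - 2*ν) := by
  have hxpos : 0 < ‖x‖ := lt_of_lt_of_le hR hx
  have hxne : x ≠ 0 := by
    intro h; rw [h, norm_zero] at hxpos; exact lt_irrefl 0 hxpos
  have h1 := hb1 x hxne
  have h2 := hb2 x hxne
  have hterm : ∀ a : Fin 3, |Y x a * cko Y a i x| ≤ 2 * c^2 * ‖x‖ ^ (1 - 2*ν) := by
    intro a
    rw [abs_mul]
    have e1 : |Y x a| ≤ c * ‖x‖ ^ (1 - ν) := (abs_coord_le (Y x) a).trans h1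
    have e2 : |cko Y a i x| ≤ 2 * (c * ‖x‖ ^ (-ν)) := by
      refine (cko_bound hY a i x).trans ?_
      have := norm_nonneg (fderiv ℝ Y x)
      nlinarith
    calc |Y x a| * |cko Y a i x| ≤ (c * ‖x‖ ^ (1 - ν)) * (2 * (c * ‖x‖ ^ (-ν))) := by
          apply mul_le_mul e1 e2 (abs_nonneg _)
          positivity
      _ = 2 * c^2 * (‖x‖ ^ (1 - ν) * ‖x‖ ^ (-ν)) := by ring
      _ = 2 * c^2 * ‖x‖ ^ (1 - 2*ν) := by
          rw [← Real.rpow_add hxpos, show (1-ν) + (-ν) = 1 - 2*ν by ring]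
  have hsum : |gfun Y i x| ≤ ∑ a : Fin 3, |Y x a * cko Y a i x| :=
    Finset.abs_sum_le_sum_abs _ _
  have hmono : ‖x‖ ^ (1 - 2*ν) ≤ R ^ (1 - 2*ν) :=
    Real.rpow_le_rpow_of_nonpos hR hx (by linarith)
  calc |gfun Y i x| ≤ ∑ a : Fin 3, |Y x a * cko Y a i x| := hsum
    _ ≤ ∑ _a : Fin 3, 2 * c^2 * ‖x‖ ^ (1 - 2*ν) := Finset.sum_le_sum fun a _ => hterm a
    _ = 6 * c^2 * ‖x‖ ^ (1 - 2*ν) := by simp [Fin.sum_univ_three]; ring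
    _ ≤ 6 * c^2 * R ^ (1 - 2*ν) := by
        have : (0:ℝ) ≤ 6 * c^2 := by positivity
        nlinarith [Real.rpow_nonneg (norm_nonneg x) (1-2*ν)]

lemma integral_bound (ν c : ℝ) (hν : 3 / 2 < ν) (hc : 0 ≤ c) {Y : E3 → E3}
    (hY : ContDiff ℝ (⊤ : ℕ∞) Y) (hL : ∀ x, vecLap Y x = 0)
    (hb1 : ∀ x : E3, x ≠ 0 → ‖Y x‖ ≤ c * ‖x‖ ^ (1 - ν))
    (hb2 : ∀ x : E3, x ≠ 0 → ‖fderiv ℝ Y x‖ ≤ c * ‖x‖ ^ (-ν))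
    {R : ℝ} (hR : 0 < R) :
    ∫ p in Icc (fun _ : Fin 3 => -R) (fun _ : Fin 3 => R), Phi Y (toE3 p)
      ≤ 144 * c^2 * R ^ (3 - 2*ν) := by
  set F : (Fin 3 → ℝ) → (Fin 3 → ℝ) := fun p i => gfun Y i (toE3 p) with hF
  set F' : (Fin 3 → ℝ) → (Fin 3 → ℝ) →L[ℝ] (Fin 3 → ℝ) := fun p =>
    ContinuousLinearMap.pi
      (fun i => (fderiv ℝ (gfun Y i) (toE3 p)).comp toE3.toContinuousLinearMap) with hF'
  have hle : (fun _ : Fin 3 => -R) ≤ (fun _ : Fin 3 => R) := fun _ => show (-R:ℝ) ≤ R by linarith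
  have hder : ∀ p, HasFDerivAt F (F' p) p := by
    intro p
    apply hasFDerivAt_pi.2
    intro i
    exact ((((gfun_contDiff hY i).differentiable (by simp))
      (toE3 p)).hasFDerivAt).comp p toE3.hasFDerivAt
  have hdiv_eq : ∀ p, (∑ i : Fin 3, F' p (Pi.single i 1) i) = Phi Y (toE3 p) := by
    intro p
    have h1 : ∀ i : Fin 3, F' p (Pi.single i 1) i = pd i (gfun Y i) (toE3 p) := fun i => rfl
    simp only [h1]
    exact div_identity hY hL (toE3 p)
  have Hc : ContinuousOn F (Icc (fun _ : Fin 3 => -R) (fun _ : Fin 3 => R)) :=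
    (continuous_pi fun i => ((gfun_contDiff hY i).continuous).comp toE3.continuous).continuousOn
  have Hi : IntegrableOn (fun p => ∑ i : Fin 3, F' p (Pi.single i 1) i)
      (Icc (fun _ : Fin 3 => -R) (fun _ : Fin 3 => R)) volume := by
    simp only [hdiv_eq]
    exact ((Phi_continuous hY).comp toE3.continuous).integrableOn_Icc
  have key := MeasureTheory.integral_divergence_of_hasFDerivAt_off_countable
    (fun _ : Fin 3 => -R) (fun _ : Fin 3 => R) hle F F' ∅ countable_empty Hc
    (fun x _ => hder x) Hi
  simp only [hdiv_eq] at key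
  rw [key]
  -- bound the six face integrals
  have face_bd : ∀ (i : Fin 3) (r : ℝ), |r| = R →
      |∫ y in Icc ((fun _ : Fin 3 => -R) ∘ i.succAbove) ((fun _ : Fin 3 => R) ∘ i.succAbove),
        F (i.insertNth r y) i| ≤ 6 * c^2 * R ^ (1 - 2*ν) * (2*R)^2 := by
    intro i r hr
    have hmeas : MeasurableSet (Icc ((fun _ : Fin 3 => -R) ∘ i.succAbove)
        ((fun _ : Fin 3 => R) ∘ i.succAbove)) := measurableSet_Icc
    have hfin : volume (Icc ((fun _ : Fin 3 => -R) ∘ i.succAbove)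
        ((fun _ : Fin 3 => R) ∘ i.succAbove)) < ⊤ := isCompact_Icc.measure_lt_top
    have hbd : ∀ y ∈ Icc ((fun _ : Fin 3 => -R) ∘ i.succAbove)
        ((fun _ : Fin 3 => R) ∘ i.succAbove),
        ‖F (i.insertNth r y) i‖ ≤ 6 * c^2 * R ^ (1 - 2*ν) := by
      intro y _
      have hx : R ≤ ‖toE3 (i.insertNth r y)‖ := by
        have h2 : |(toE3 (i.insertNth r y)) i| ≤ ‖toE3 (i.insertNth r y)‖ :=
          abs_coord_le _ i
        have h3 : (toE3 (i.insertNth r y)) i = r := by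
          show (i.insertNth (α := fun _ => ℝ) r y) i = r
          simp
        rw [h3, hr] at h2
        exact h2
      exact (gfun_bound ν c hν hc hY hb1 hb2 hR hx i)
    have := norm_setIntegral_le_of_norm_le_const hfin hbd
    refine this.trans ?_
    have hvol : (volume (Icc ((fun _ : Fin 3 => -R) ∘ i.succAbove)
        ((fun _ : Fin 3 => R) ∘ i.succAbove))).toReal = (2*R)^2 := by
      rw [Real.volume_Icc_pi_toReal (fun j => by show (-R:ℝ) ≤ R; linarith)]
      simp [Finset.prod_const]
      ring
    rw [measureReal_def, hvol]
  have M := 6 * c^2 * R ^ (1 - 2*ν) * (2*R)^2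
  have hfront : ∀ i : Fin 3, |∫ y in Icc ((fun _ : Fin 3 => -R) ∘ i.succAbove)
      ((fun _ : Fin 3 => R) ∘ i.succAbove), F (i.insertNth R y) i|
        ≤ 6 * c^2 * R ^ (1 - 2*ν) * (2*R)^2 :=
    fun i => face_bd i R (abs_of_pos hR)
  have hback : ∀ i : Fin 3, |∫ y in Icc ((fun _ : Fin 3 => -R) ∘ i.succAbove)
      ((fun _ : Fin 3 => R) ∘ i.succAbove), F (i.insertNth (-R) y) i|
        ≤ 6 * c^2 * R ^ (1 - 2*ν) * (2*R)^2 :=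
    fun i => face_bd i (-R) (by rw [abs_neg]; exact abs_of_pos hR)
  have hRexp : 144 * c^2 * R ^ (3 - 2*ν) = 36 * (6 * c^2 * R ^ (1 - 2*ν) * (2*R)^2) / 6 := by
    have : R ^ (3 - 2*ν) = R ^ (1 - 2*ν) * R^(2:ℕ) := by
      rw [show (3 - 2*ν) = (1 - 2*ν) + ((2:ℕ):ℝ) by push_cast; ring, Real.rpow_add hR,
        Real.rpow_natCast]
    rw [this]; ring
  rw [hRexp]
  rw [Fin.sum_univ_three]
  have b1 := hfront 0; have b2 := hfront 1; have b3 := hfront 2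
  have b4 := hback 0; have b5 := hback 1; have b6 := hback 2
  simp only [abs_le] at b1 b2 b3 b4 b5 b6
  linarith [b1.1, b1.2, b2.1, b2.2, b3.1, b3.2, b4.1, b4.2, b5.1, b5.2, b6.1, b6.2]

/-- a smooth vector field on all of `ℝ³` with `L Y = 0` and decay
`‖Y(x)‖ ≤ c‖x‖^{1−ν}`, `‖DY(x)‖ ≤ c‖x‖^{−ν}` (for `ν > 3/2`) is conformal Killing. -/
theorem vecLap_kernel_decay_is_conformal_killing (ν c : ℝ) (hν : 3 / 2 < ν) (hc : 0 ≤ c)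
    (Y : E3 → E3) (hY : ContDiff ℝ (⊤ : ℕ∞) Y) (hL : ∀ x : E3, vecLap Y x = 0)
    (hb1 : ∀ x : E3, x ≠ 0 → ‖Y x‖ ≤ c * ‖x‖ ^ (1 - ν))
    (hb2 : ∀ x : E3, x ≠ 0 → ‖fderiv ℝ Y x‖ ≤ c * ‖x‖ ^ (-ν)) :
    ∀ x : E3, ∀ a b : Fin 3, cko Y a b x = 0 := by
  intro x₀ a₀ b₀
  by_contra hne
  set p₀ : Fin 3 → ℝ := (EuclideanSpace.equiv (Fin 3) ℝ) x₀ with hp₀def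
  have hp₀ : toE3 p₀ = x₀ := (EuclideanSpace.equiv (Fin 3) ℝ).symm_apply_apply x₀
  set m := Phi Y x₀ with hmdef
  have hm : 0 < m := by
    have h1 : (cko Y a₀ b₀ x₀)^2 ≤ ∑ b : Fin 3, (cko Y a₀ b x₀)^2 :=
      Finset.single_le_sum (f := fun b => (cko Y a₀ b x₀)^2)
        (fun b _ => sq_nonneg _) (Finset.mem_univ b₀)
    have h2 : ∑ b : Fin 3, (cko Y a₀ b x₀)^2 ≤ m :=
      Finset.single_le_sum (f := fun a => ∑ b : Fin 3, (cko Y a b x₀)^2)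
        (fun a _ => Finset.sum_nonneg fun b _ => sq_nonneg _) (Finset.mem_univ a₀)
    have h0 : 0 < (cko Y a₀ b₀ x₀)^2 := by positivity
    linarith
  set Ψ : (Fin 3 → ℝ) → ℝ := fun p => Phi Y (toE3 p) with hΨdef
  have hΨc : Continuous Ψ := (Phi_continuous hY).comp toE3.continuous
  have hev : ∀ᶠ p in nhds p₀, m/2 < Ψ p := by
    have hΨp₀ : Ψ p₀ = m := by rw [hΨdef]; simp only [hp₀, hmdef]
    have := hΨc.continuousAt (x := p₀)
    exact this.eventually (eventually_gt_nhds (by rw [hΨp₀] at *; linarith) )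
  rw [Metric.nhds_basis_closedBall.eventually_iff] at hev
  obtain ⟨δ, hδpos, hδ⟩ := hev
  set s₀ : Set (Fin 3 → ℝ) := Icc (fun j => p₀ j - δ) (fun j => p₀ j + δ) with hs₀def
  have hs₀lb : ∀ p ∈ s₀, m/2 ≤ Ψ p := by
    intro p hp
    refine le_of_lt (hδ ?_)
    rw [Metric.mem_closedBall]
    refine (dist_pi_le_iff hδpos.le).2 fun j => ?_
    have e1 : p₀ j - δ ≤ p j := hp.1 j
    have e2 : p j ≤ p₀ j + δ := hp.2 j
    rw [Real.dist_eq, abs_le]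
    constructor <;> linarith
  have hs₀le : (fun j => p₀ j - δ) ≤ (fun j => p₀ j + δ) :=
    fun j => show p₀ j - δ ≤ p₀ j + δ by linarith
  set v : ℝ := (2*δ)^3 with hvdef
  have hvol : (volume s₀).toReal = v := by
    rw [hs₀def, Real.volume_Icc_pi_toReal hs₀le]
    simp [Finset.prod_const]
    ring
  have hvpos : 0 < v := by positivity
  have hlow : m/2 * v ≤ ∫ p in s₀, Ψ p := by
    have := setIntegral_ge_of_const_le_real (μ := volume) (s := s₀) (c := m/2)
      measurableSet_Icc (isCompact_Icc.measure_lt_top.ne) hs₀lb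
      (hΨc.continuousOn.integrableOn_compact isCompact_Icc)
    rw [measureReal_def, hvol] at this
    exact this
  set R₀ : ℝ := ‖p₀‖ + δ with hR₀def
  have hR₀pos : 0 < R₀ := by positivity
  have hchain : ∀ R, R₀ ≤ R → m/2 * v ≤ 144 * c^2 * R ^ (3 - 2*ν) := by
    intro R hR
    have hRpos : 0 < R := lt_of_lt_of_le hR₀pos hR
    have hsub : s₀ ⊆ Icc (fun _ : Fin 3 => -R) (fun _ : Fin 3 => R) := by
      refine Icc_subset_Icc (fun j => ?_) (fun j => ?_)
      · show -R ≤ p₀ j - δ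
        have := norm_le_pi_norm p₀ j
        have h2 : |p₀ j| ≤ ‖p₀‖ := by simpa [Real.norm_eq_abs] using this
        rw [abs_le] at h2
        rw [hR₀def] at hR
        linarith [h2.1]
      · show p₀ j + δ ≤ R
        have := norm_le_pi_norm p₀ j
        have h2 : |p₀ j| ≤ ‖p₀‖ := by simpa [Real.norm_eq_abs] using this
        rw [abs_le] at h2
        rw [hR₀def] at hR
        linarith [h2.2]
    have hmono : (∫ p in s₀, Ψ p) ≤
        ∫ p in Icc (fun _ : Fin 3 => -R) (fun _ : Fin 3 => R), Ψ p := by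
      refine setIntegral_mono_set
        (hΨc.continuousOn.integrableOn_compact isCompact_Icc)
        (Filter.Eventually.of_forall fun p => Phi_nonneg Y _)
        (HasSubset.Subset.eventuallyLE hsub)
    have hib := integral_bound ν c hν hc hY hL hb1 hb2 hRpos
    calc m/2 * v ≤ ∫ p in s₀, Ψ p := hlow
      _ ≤ ∫ p in Icc (fun _ : Fin 3 => -R) (fun _ : Fin 3 => R), Ψ p := hmono
      _ ≤ 144 * c^2 * R ^ (3 - 2*ν) := hib
  have hT : Filter.Tendsto (fun R : ℝ => 144 * c^2 * R ^ (3 - 2*ν)) Filter.atTop (nhds 0) := by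
    have h1 : Filter.Tendsto (fun R : ℝ => R ^ (-(2*ν - 3))) Filter.atTop (nhds 0) :=
      tendsto_rpow_neg_atTop (by linarith)
    have h2 : (fun R : ℝ => R ^ (3 - 2*ν)) = fun R : ℝ => R ^ (-(2*ν - 3)) := by
      funext R; congr 1; ring
    have h3 := h1.const_mul (144 * c^2)
    rw [mul_zero] at h3
    have h4 : (fun R : ℝ => 144 * c^2 * R ^ (3 - 2*ν))
        = fun R : ℝ => 144 * c^2 * R ^ (-(2*ν - 3)) := by
      funext R
      rw [show (3 - 2*ν) = -(2*ν - 3) by ring]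
    rw [h4]
    exact h3
  have hfin := (hT.eventually (eventually_lt_nhds (show (0:ℝ) < m/2 * v by positivity))).and
    (Filter.eventually_ge_atTop R₀)
  obtain ⟨R, hR1, hR2⟩ := hfin.exists
  have := hchain R hR2
  linarith
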